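/- Let A' ⊂ ℝ⁸ be the convex hull of the rays from ε₈ through the other 8 vertices of the fundamental E₈ alcove A, and for 0 ≤ δ ≤ 2 let H_δ be the hyperplane {x : (ε₈ - x, ω₁) = δ} where ω₁ = 2ε₈. Then for all x in A' ∩ H_δ one has (δ/2 - 1)² ≤ (x, x) ≤ 2δ² - δ + 1. -/
import Mathlib


/-- The standard inner product on `ℝ⁸`. -/
def dot8 (x y : Fin 8 → ℝ) : ℝ := ∑ i, x i * y i

/-- The vertex `ε₈ = ω₁/2` of the fundamental alcove of `E₈`. -/
noncomputable def e8vert : Fin 8 → ℝ := ![0, 0, 0, 0, 0, 0, 0, 1]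

/-- The eight vertices of the fundamental alcove of `E₈` other than `ε₈`. -/
noncomputable def alcoveVerts : Fin 8 → Fin 8 → ℝ :=
  ![![1/6, 1/6, 1/6, 1/6, 1/6, 1/6, 1/6, 5/6],
    ![-1/8, 1/8, 1/8, 1/8, 1/8, 1/8, 1/8, 7/8],
    ![0, 0, 1/6, 1/6, 1/6, 1/6, 1/6, 5/6],
    ![0, 0, 0, 1/5, 1/5, 1/5, 1/5, 4/5],
    ![0, 0, 0, 0, 1/4, 1/4, 1/4, 3/4],
    ![0, 0, 0, 0, 0, 1/3, 1/3, 2/3],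
    ![0, 0, 0, 0, 0, 0, 1/2, 1/2],
    ![0, 0, 0, 0, 0, 0, 0, 0]]

set_option maxHeartbeats 2000000 in
/-- Bounds for `(x,x)` on `A' ∩ H_δ`, where `A'` is the convex hull of the rays from
`ε₈` through the other eight vertices of the fundamental `E₈` alcove, and `H_δ` is the
hyperplane `(ε₈ - x, ω₁) = δ` with `ω₁ = 2ε₈`: for `0 ≤ δ ≤ 2`,
`(δ/2 - 1)² ≤ (x,x) ≤ 2δ² - δ + 1`. -/
theorem stmt12 (δ : ℝ) (h0 : 0 ≤ δ) (h2 : δ ≤ 2) (x : Fin 8 → ℝ)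
    (s : Fin 8 → ℝ) (hs : ∀ i, 0 ≤ s i)
    (hx : ∀ j, x j = e8vert j + ∑ i, s i * (alcoveVerts i j - e8vert j))
    (hH : 2 * (1 - x 7) = δ) :
    (δ / 2 - 1)^2 ≤ dot8 x x ∧ dot8 x x ≤ 2 * δ^2 - δ + 1 := by
  have e0 := hx 0
  have e1 := hx 1
  have e2 := hx 2
  have e3 := hx 3
  have e4 := hx 4
  have e5 := hx 5
  have e6 := hx 6
  have e7 := hx 7
  simp only [e8vert, alcoveVerts, Fin.sum_univ_eight, Matrix.cons_val_zero, Matrix.cons_val_succ,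
    show ((1:Fin 2)) = Fin.succ 0 from rfl, show ((1:Fin 3)) = Fin.succ 0 from rfl, show ((2:Fin 3)) = Fin.succ 1 from rfl, show ((1:Fin 4)) = Fin.succ 0 from rfl, show ((2:Fin 4)) = Fin.succ 1 from rfl, show ((3:Fin 4)) = Fin.succ 2 from rfl, show ((1:Fin 5)) = Fin.succ 0 from rfl, show ((2:Fin 5)) = Fin.succ 1 from rfl, show ((3:Fin 5)) = Fin.succ 2 from rfl, show ((4:Fin 5)) = Fin.succ 3 from rfl, show ((1:Fin 6)) = Fin.succ 0 from rfl, show ((2:Fin 6)) = Fin.succ 1 from rfl, show ((3:Fin 6)) = Fin.succ 2 from rfl, show ((4:Fin 6)) = Fin.succ 3 from rfl, show ((5:Fin 6)) = Fin.succ 4 from rfl, show ((1:Fin 7)) = Fin.succ 0 from rfl, show ((2:Fin 7)) = Fin.succ 1 from rfl, show ((3:Fin 7)) = Fin.succ 2 from rfl, show ((4:Fin 7)) = Fin.succ 3 from rfl, show ((5:Fin 7)) = Fin.succ 4 from rfl, show ((6:Fin 7)) = Fin.succ 5 from rfl, show ((1:Fin 8)) = Fin.succ 0 from rfl, show ((2:Fin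 8)) = Fin.succ 1 from rfl, show ((3:Fin 8)) = Fin.succ 2 from rfl, show ((4:Fin 8)) = Fin.succ 3 from rfl, show ((5:Fin 8)) = Fin.succ 4 from rfl, show ((6:Fin 8)) = Fin.succ 5 from rfl, show ((7:Fin 8)) = Fin.succ 6 from rfl] at e0 e1 e2 e3 e4 e5 e6 e7
  norm_num at e0 e1 e2 e3 e4 e5 e6 e7
  simp only [show Fin.succ ((0:Fin 1)) = (1:Fin 2) from rfl, show Fin.succ ((0:Fin 2)) = (1:Fin 3) from rfl, show Fin.succ ((1:Fin 2)) = (2:Fin 3) from rfl, show Fin.succ ((0:Fin 3)) = (1:Fin 4) from rfl, show Fin.succ ((1:Fin 3)) = (2:Fin 4) from rfl, show Fin.succ ((2:Fin 3)) = (3:Fin 4) from rfl, show Fin.succ ((0:Fin 4)) = (1:Fin 5) from rfl, show Fin.succ ((1:Fin 4)) = (2:Fin 5) from rfl, show Fin.succ ((2:Fin 4)) = (3:Fin 5) from rfl, show Fin.succ ((3:Fin 4)) = (4:Fin 5) from rfl, show Fin.succ ((0:Fin 5)) = (1:Fin 6) from rfl, show Fin.succ ((1:Fin 5)) = (2:Fin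 6) from rfl, show Fin.succ ((2:Fin 5)) = (3:Fin 6) from rfl, show Fin.succ ((3:Fin 5)) = (4:Fin 6) from rfl, show Fin.succ ((4:Fin 5)) = (5:Fin 6) from rfl, show Fin.succ ((0:Fin 6)) = (1:Fin 7) from rfl, show Fin.succ ((1:Fin 6)) = (2:Fin 7) from rfl, show Fin.succ ((2:Fin 6)) = (3:Fin 7) from rfl, show Fin.succ ((3:Fin 6)) = (4:Fin 7) from rfl, show Fin.succ ((4:Fin 6)) = (5:Fin 7) from rfl, show Fin.succ ((5:Fin 6)) = (6:Fin 7) from rfl, show Fin.succ ((0:Fin 7)) = (1:Fin 8) from rfl, show Fin.succ ((1:Fin 7)) = (2:Fin 8) from rfl, show Fin.succ ((2:Fin 7)) = (3:Fin 8) from rfl, show Fin.succ ((3:Fin 7)) = (4:Fin 8) from rfl, show Fin.succ ((4:Fin 7)) = (5:Fin 8) from rfl, show Fin.succ ((5:Fin 7)) = (6:Fin 8) from rfl, show Fin.succ ((6:Fin 7)) = (7:Fin 8) from rfl] at e3 e4 e5 e6 e7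
  have hd : dot8 x x = x 0^2 + x 1^2 + x 2^2 + x 3^2 + x 4^2 + x 5^2 + x 6^2 + x 7^2 := by
    simp [dot8, Fin.sum_univ_eight]; ring
  have hs0 := hs 0
  have hs1 := hs 1
  have hs2 := hs 2
  have hs3 := hs 3
  have hs4 := hs 4
  have hs5 := hs 5
  have hs6 := hs 6
  have hs7 := hs 7
  have hx7 : (δ / 2 - 1)^2 = x 7 ^ 2 := by rw [← hH]; ring
  constructor
  · rw [hd, hx7]
    linarith [sq_nonneg (x 0), sq_nonneg (x 1), sq_nonneg (x 2), sq_nonneg (x 3),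
      sq_nonneg (x 4), sq_nonneg (x 5), sq_nonneg (x 6)]
  · have p2 : (0:ℝ) ≤ (s 2 * (1/6) + s 3 * (1/5) + s 4 * (1/4) + s 5 * (1/3) + s 6 * (1/2) + s 7) * (2*(s 0 * (1/6)) + 2*(s 1 * (1/8)) + s 2 * (1/6) + s 3 * (1/5) + s 4 * (1/4) + s 5 * (1/3) + s 6 * (1/2) + s 7) := mul_nonneg (by linarith) (by linarith)
    have p3 : (0:ℝ) ≤ (s 3 * (1/5) + s 4 * (1/4) + s 5 * (1/3) + s 6 * (1/2) + s 7) * (2*(s 0 * (1/6)) + 2*(s 1 * (1/8)) + 2*(s 2 * (1/6)) + s 3 * (1/5) + s 4 * (1/4) + s 5 * (1/3) + s 6 * (1/2) + s 7) := mul_nonneg (by linarith) (by linarith)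
    have p4 : (0:ℝ) ≤ (s 4 * (1/4) + s 5 * (1/3) + s 6 * (1/2) + s 7) * (2*(s 0 * (1/6)) + 2*(s 1 * (1/8)) + 2*(s 2 * (1/6)) + 2*(s 3 * (1/5)) + s 4 * (1/4) + s 5 * (1/3) + s 6 * (1/2) + s 7) := mul_nonneg (by linarith) (by linarith)
    have p5 : (0:ℝ) ≤ (s 5 * (1/3) + s 6 * (1/2) + s 7) * (2*(s 0 * (1/6)) + 2*(s 1 * (1/8)) + 2*(s 2 * (1/6)) + 2*(s 3 * (1/5)) + 2*(s 4 * (1/4)) + s 5 * (1/3) + s 6 * (1/2) + s 7) := mul_nonneg (by linarith) (by linarith)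
    have p6 : (0:ℝ) ≤ (s 6 * (1/2) + s 7) * (2*(s 0 * (1/6)) + 2*(s 1 * (1/8)) + 2*(s 2 * (1/6)) + 2*(s 3 * (1/5)) + 2*(s 4 * (1/4)) + 2*(s 5 * (1/3)) + s 6 * (1/2) + s 7) := mul_nonneg (by linarith) (by linarith)
    have p7 : (0:ℝ) ≤ (s 7) * (2*(s 0 * (1/6)) + 2*(s 1 * (1/8)) + 2*(s 2 * (1/6)) + 2*(s 3 * (1/5)) + 2*(s 4 * (1/4)) + 2*(s 5 * (1/3)) + 2*(s 6 * (1/2)) + s 7) := mul_nonneg (by linarith) (by linarith)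
    have p01 : (0:ℝ) ≤ (s 0 * (1/6)) * (s 1 * (1/8)) :=
      mul_nonneg (by linarith) (by linarith)
    have hT : δ = 2 * (s 0 * (1/6) + s 1 * (1/8) + s 2 * (1/6) + s 3 * (1/5) + s 4 * (1/4) + s 5 * (1/3) + s 6 * (1/2) + s 7) := by rw [← hH, e7]; ring
    rw [hd, e0, e1, e2, e3, e4, e5, e6, e7, hT]
    linarith [p2, p3, p4, p5, p6, p7, p01]
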